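/- Let e : ℝ → ℝ^d be twice differentiable with e''(t) = −Ω²·e(t) + G·e(t) for all t, e(t₀) = e₀ and e'(t₀) = C_B·b₀ − Ω²·p₀, and let b : ℝ → ℝ^d be differentiable with b'(t) = −C_E·e(t) and b(t₀) = b₀. Assume ‖Ω·e₀‖² ≤ (2/3)H₀, ‖C_B·b₀‖² ≤ (1/3)H₀, ‖Ω²·p₀‖² ≤ (1/3)H₀, ‖C_E·e₀‖² ≤ 2H₀, ‖e₀‖² ≤ H₀ and ‖b₀‖² ≤ H₀. Then for all t with t₀ ≤ t ≤ T one has ‖e(t)‖ ≤ (1 + 2(T − t₀))·√H₀ and ‖b(t)‖ ≤ (1 + 2(T − t₀))·√H₀. -/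

import Mathlib

noncomputable def mulE {d : ℕ} (A : Matrix (Fin d) (Fin d) ℝ)
    (v : EuclideanSpace ℝ (Fin d)) : EuclideanSpace ℝ (Fin d) :=
  (WithLp.equiv 2 (Fin d → ℝ)).symm (A.mulVec ((WithLp.equiv 2 (Fin d → ℝ)) v))

open RealInnerProductSpace Matrix

noncomputable def mulECLM {d : ℕ} (A : Matrix (Fin d) (Fin d) ℝ) :
    EuclideanSpace ℝ (Fin d) →L[ℝ] EuclideanSpace ℝ (Fin d) :=
  LinearMap.toContinuousLinearMap
    { toFun := mulE A
      map_add' := by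
        intro x y
        simp [mulE, WithLp.ofLp_add, Matrix.mulVec_add, WithLp.toLp_add]
      map_smul' := by
        intro c x
        simp [mulE, WithLp.ofLp_smul, Matrix.mulVec_smul, WithLp.toLp_smul] }

lemma mulECLM_apply {d : ℕ} (A : Matrix (Fin d) (Fin d) ℝ) (v : EuclideanSpace ℝ (Fin d)) :
    mulECLM A v = mulE A v := rfl

lemma mulE_hasDerivAt {d : ℕ} (A : Matrix (Fin d) (Fin d) ℝ)
    {f : ℝ → EuclideanSpace ℝ (Fin d)} {f' : EuclideanSpace ℝ (Fin d)} {t : ℝ}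
    (hf : HasDerivAt f f' t) :
    HasDerivAt (fun s => mulE A (f s)) (mulE A f') t := by
  exact ((mulECLM A).hasFDerivAt.comp_hasDerivAt t hf)

lemma mulE_mul {d : ℕ} (A B : Matrix (Fin d) (Fin d) ℝ) (v : EuclideanSpace ℝ (Fin d)) :
    mulE (A * B) v = mulE A (mulE B v) := by
  simp [mulE, Matrix.mulVec_mulVec]

lemma mulE_neg {d : ℕ} (A : Matrix (Fin d) (Fin d) ℝ) (v : EuclideanSpace ℝ (Fin d)) :
    mulE (-A) v = -mulE A v := by
  simp [mulE, Matrix.neg_mulVec]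

lemma inner_mulE {d : ℕ} (A : Matrix (Fin d) (Fin d) ℝ) (x y : EuclideanSpace ℝ (Fin d)) :
    ⟪mulE A x, y⟫ = ⟪x, mulE Aᵀ y⟫ := by
  simp only [mulE, PiLp.inner_apply, RCLike.inner_apply, starRingEnd_apply, star_trivial,
    WithLp.equiv_apply, WithLp.equiv_symm_apply, WithLp.ofLp_toLp]
  have : ∀ (v w : Fin d → ℝ), (∑ i, v i * w i) = v ⬝ᵥ w := fun v w => rfl
  rw [this, this, Matrix.dotProduct_mulVec, ← Matrix.mulVec_transpose]

set_option maxHeartbeats 1000000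
/-- Stability bounds for the electric field and the magnetic flux:
for the exact solution of `e'' = −Ω²·e + G·e`, `b' = −C_E·e` with the stated initial
data bounds, one has `‖e(t)‖ ≤ (1 + 2(T − t₀))·√H₀` and `‖b(t)‖ ≤ (1 + 2(T − t₀))·√H₀`
for all `t₀ ≤ t ≤ T`. -/
theorem stmt7
    (d : ℕ) (hd : 1 ≤ d)
    (CE CB : Matrix (Fin d) (Fin d) ℝ) (hCB : CB = CE.transpose)
    (ωv : Fin d → ℝ) (hωv : ∀ i, 0 ≤ ωv i)
    (t0 T H0 : ℝ) (hH0 : 0 < H0) (hT : t0 < T)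
    (p0 e0 b0 : EuclideanSpace ℝ (Fin d))
    (e ed b : ℝ → EuclideanSpace ℝ (Fin d))
    (he : ∀ t, HasDerivAt e (ed t) t)
    (hed : ∀ t, HasDerivAt ed
      (-mulE ((Matrix.diagonal ωv)^2) (e t) + mulE (-(CB * CE)) (e t)) t)
    (hb : ∀ t, HasDerivAt b (-mulE CE (e t)) t)
    (hinite : e t0 = e0)
    (hinited : ed t0 = mulE CB b0 - mulE ((Matrix.diagonal ωv)^2) p0)
    (hinitb : b t0 = b0)
    (hΩe0 : ‖mulE (Matrix.diagonal ωv) e0‖^2 ≤ (2/3) * H0)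
    (hCBb0 : ‖mulE CB b0‖^2 ≤ (1/3) * H0)
    (hΩ2p0 : ‖mulE ((Matrix.diagonal ωv)^2) p0‖^2 ≤ (1/3) * H0)
    (hCEe0 : ‖mulE CE e0‖^2 ≤ 2 * H0)
    (he0 : ‖e0‖^2 ≤ H0)
    (hb0 : ‖b0‖^2 ≤ H0) :
    ∀ t : ℝ, t0 ≤ t → t ≤ T →
      ‖e t‖ ≤ (1 + 2 * (T - t0)) * Real.sqrt H0 ∧
      ‖b t‖ ≤ (1 + 2 * (T - t0)) * Real.sqrt H0 := by
  set Ω : Matrix (Fin d) (Fin d) ℝ := Matrix.diagonal ωv with hΩdef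
  have hsq : ∀ x : EuclideanSpace ℝ (Fin d), ⟪x, x⟫ = ‖x‖^2 := fun x =>
    real_inner_self_eq_norm_sq x
  set En : ℝ → ℝ := fun t => ‖ed t‖^2 + ‖mulE Ω (e t)‖^2 + ‖mulE CE (e t)‖^2 with hEn
  have hEeq : En = fun s => ⟪ed s, ed s⟫ + ⟪mulE Ω (e s), mulE Ω (e s)⟫
      + ⟪mulE CE (e s), mulE CE (e s)⟫ := by
    funext s
    simp only [hEn, hsq]
  -- Energy is conserved
  have hEderiv : ∀ t, HasDerivAt En (0 : ℝ) t := by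
    intro t
    rw [hEeq]
    have h1 := HasDerivAt.inner ℝ (hed t) (hed t)
    have h2 := HasDerivAt.inner ℝ (mulE_hasDerivAt Ω (he t)) (mulE_hasDerivAt Ω (he t))
    have h3 := HasDerivAt.inner ℝ (mulE_hasDerivAt CE (he t)) (mulE_hasDerivAt CE (he t))
    have h := (h1.add h2).add h3
    refine h.congr_deriv ?_
    set u := e t
    set u' := ed t
    set a := mulE Ω (mulE Ω u) with ha
    set c := mulE CE.transpose (mulE CE u) with hc
    have hw : -mulE (Ω^2) u + mulE (-(CB * CE)) u = -a + -c := by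
      rw [hCB, sq, mulE_mul, mulE_neg, mulE_mul]
    rw [hw]
    have hΩ1 : ⟪mulE Ω u', mulE Ω u⟫ = ⟪u', a⟫ := by
      rw [inner_mulE, hΩdef, Matrix.diagonal_transpose]
    have hC1 : ⟪mulE CE u', mulE CE u⟫ = ⟪u', c⟫ := by rw [inner_mulE]
    simp only [inner_add_left, inner_add_right, inner_neg_left, inner_neg_right]
    linarith [hΩ1, hC1, real_inner_comm a u', real_inner_comm c u',
      real_inner_comm (mulE Ω u) (mulE Ω u'), real_inner_comm (mulE CE u) (mulE CE u'),
      real_inner_comm u' a, real_inner_comm u' c]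
  have hconst : ∀ t, En t = En t0 := fun t =>
    is_const_of_deriv_eq_zero (fun s => (hEderiv s).differentiableAt)
      (fun s => (hEderiv s).deriv) t t0
  have hval : ∀ s, En s = ‖ed s‖^2 + ‖mulE Ω (e s)‖^2 + ‖mulE CE (e s)‖^2 := fun s => rfl
  -- Energy at t0 is at most 4 H0
  have hE0 : En t0 ≤ 4 * H0 := by
    have hed0 : ‖ed t0‖^2 ≤ (4/3) * H0 := by
      rw [hinited]
      have h1 := norm_sub_le (mulE CB b0) (mulE (Ω^2) p0)
      have h4 := norm_nonneg (mulE CB b0 - mulE (Ω^2) p0)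
      have h5 := mul_self_le_mul_self h4 h1
      have h6 := sq_nonneg (‖mulE CB b0‖ - ‖mulE (Ω^2) p0‖)
      nlinarith [hCBb0, hΩ2p0]
    rw [hval, hinite]
    linarith [hΩe0, hCEe0]
  have hEt : ∀ t, En t ≤ 4 * H0 := fun t => (hconst t).le.trans hE0
  have hsqrt := Real.sq_sqrt hH0.le
  have hsn := Real.sqrt_nonneg H0
  -- pointwise bounds on the derivatives
  have hedb : ∀ s, ‖ed s‖ ≤ 2 * Real.sqrt H0 := by
    intro s
    have h1 : ‖ed s‖^2 ≤ 4 * H0 := by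
      have h := hEt s
      rw [hval] at h
      nlinarith [sq_nonneg ‖mulE Ω (e s)‖, sq_nonneg ‖mulE CE (e s)‖]
    nlinarith [norm_nonneg (ed s)]
  have hCEb : ∀ s, ‖mulE CE (e s)‖ ≤ 2 * Real.sqrt H0 := by
    intro s
    have h1 : ‖mulE CE (e s)‖^2 ≤ 4 * H0 := by
      have h := hEt s
      rw [hval] at h
      nlinarith [sq_nonneg ‖mulE Ω (e s)‖, sq_nonneg ‖ed s‖]
    nlinarith [norm_nonneg (mulE CE (e s))]
  intro t ht0 htT
  have he0n : ‖e0‖ ≤ Real.sqrt H0 := by nlinarith [norm_nonneg e0]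
  have hb0n : ‖b0‖ ≤ Real.sqrt H0 := by nlinarith [norm_nonneg b0]
  constructor
  · have key := norm_image_sub_le_of_norm_deriv_le_segment'
      (f := e) (f' := ed) (a := t0) (b := t) (C := 2 * Real.sqrt H0)
      (fun x _ => (he x).hasDerivWithinAt) (fun x _ => hedb x) t (Set.right_mem_Icc.2 ht0)
    have h1 : ‖e t‖ ≤ ‖e t0‖ + ‖e t - e t0‖ := by
      simpa using norm_add_le (e t0) (e t - e t0)
    rw [hinite] at h1 key
    nlinarith [hsn]
  · have key := norm_image_sub_le_of_norm_deriv_le_segment'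
      (f := b) (f' := fun x => -mulE CE (e x)) (a := t0) (b := t) (C := 2 * Real.sqrt H0)
      (fun x _ => (hb x).hasDerivWithinAt)
      (fun x _ => by simpa using hCEb x) t (Set.right_mem_Icc.2 ht0)
    have h1 : ‖b t‖ ≤ ‖b t0‖ + ‖b t - b t0‖ := by
      simpa using norm_add_le (b t0) (b t - b t0)
    rw [hinitb] at h1 key
    nlinarith [hsn]
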